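/- There exist constants c, C > 0 independent of ρ, θ, v_n such that for all ψ = (φ, χ): c(ρ|v_n|(φ_n^⊥)² + (ρ|v_n| + θ)φ_n² + χ²/(ρ|v_n| + θ)) ≤ |A_n(u)|_Θ ψ·ψ ≤ C(ρ|v_n|(φ_n^⊥)² + (ρ|v_n| + θ)φ_n² + χ²/(ρ|v_n| + θ)). -/

import Mathlib

open Matrix

private def Pm (n0 n1 : ℝ) : Matrix (Fin 3) (Fin 3) ℝ :=
  !![n1^2, -(n0*n1), 0; -(n0*n1), n0^2, 0; 0, 0, 0]

private def Mm (a θ n0 n1 : ℝ) : Matrix (Fin 3) (Fin 3) ℝ :=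
  !![(a^2+2*θ^2)*n0^2, (a^2+2*θ^2)*(n0*n1), a*θ*n0;
     (a^2+2*θ^2)*(n0*n1), (a^2+2*θ^2)*n1^2, a*θ*n1;
     a*θ*n0, a*θ*n1, 2*θ^2]

private def Sm (a θ n0 n1 : ℝ) : Matrix (Fin 3) (Fin 3) ℝ :=
  !![a, 0, θ*n0; 0, a, θ*n1; θ*n0, θ*n1, 0]

private lemma hPP (n0 n1 : ℝ) (hn : n0^2 + n1^2 = 1) :
    Pm n0 n1 * Pm n0 n1 = Pm n0 n1 := by
  ext i j
  fin_cases i <;> fin_cases j <;>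
    simp [Pm, Matrix.mul_apply, Fin.sum_univ_three, Matrix.vecHead, Matrix.vecTail]
  · linear_combination (n1^2) * hn
  · linear_combination (-(n0*n1)) * hn
  · linear_combination (-(n0*n1)) * hn
  · linear_combination (n0^2) * hn

private lemma hPM (a θ n0 n1 : ℝ) : Pm n0 n1 * Mm a θ n0 n1 = 0 := by
  ext i j
  fin_cases i <;> fin_cases j <;>
    simp [Pm, Mm, Matrix.mul_apply, Fin.sum_univ_three, Matrix.vecHead, Matrix.vecTail] <;> ring

private lemma hMP (a θ n0 n1 : ℝ) : Mm a θ n0 n1 * Pm n0 n1 = 0 := by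
  ext i j
  fin_cases i <;> fin_cases j <;>
    simp [Pm, Mm, Matrix.mul_apply, Fin.sum_univ_three, Matrix.vecHead, Matrix.vecTail] <;> ring

private lemma hMM (a θ n0 n1 : ℝ) (hn : n0^2 + n1^2 = 1) :
    Mm a θ n0 n1 * Mm a θ n0 n1 =
      (a^2+4*θ^2) • (Sm a θ n0 n1 * Sm a θ n0 n1) - (a^2*(a^2+4*θ^2)) • Pm n0 n1 := by
  ext i j
  fin_cases i <;> fin_cases j <;>
    simp [Pm, Mm, Sm, Matrix.mul_apply, Fin.sum_univ_three, Matrix.vecHead, Matrix.vecTail]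
  · linear_combination ((a^2+2*θ^2)^2*n0^2 + a^2*(a^2+4*θ^2)) * hn
  · linear_combination ((a^2+2*θ^2)^2*n0*n1) * hn
  · linear_combination ((a^2+2*θ^2)*a*θ*n0) * hn
  · linear_combination ((a^2+2*θ^2)^2*n0*n1) * hn
  · linear_combination ((a^2+2*θ^2)^2*n1^2 + a^2*(a^2+4*θ^2)) * hn
  · linear_combination ((a^2+2*θ^2)*a*θ*n1) * hn
  · linear_combination ((a^2+2*θ^2)*a*θ*n0) * hn
  · linear_combination ((a^2+2*θ^2)*a*θ*n1) * hn
  · linear_combination (-(4*θ^4)) * hn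

private lemma hT2 (a θ n0 n1 s : ℝ) (hn : n0^2 + n1^2 = 1) (hs0 : 0 < s)
    (hs2 : s^2 = a^2 + 4*θ^2) :
    (|a| • Pm n0 n1 + s⁻¹ • Mm a θ n0 n1) * (|a| • Pm n0 n1 + s⁻¹ • Mm a θ n0 n1)
      = Sm a θ n0 n1 * Sm a θ n0 n1 := by
  have c1 : s⁻¹ * (s⁻¹ * (a^2+4*θ^2)) = 1 := by
    rw [← hs2, show s⁻¹ * (s⁻¹ * s^2) = (s⁻¹*s)^2 from by ring, inv_mul_cancel₀ hs0.ne',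
      one_pow]
  have c2 : s⁻¹ * (s⁻¹ * (a^2*(a^2+4*θ^2))) = a^2 := by
    rw [← hs2, show s⁻¹ * (s⁻¹ * (a^2*s^2)) = a^2*(s⁻¹*s)^2 from by ring,
      inv_mul_cancel₀ hs0.ne']; ring
  have c3 : |a| * |a| = a^2 := (abs_mul_abs_self a).trans (pow_two a).symm
  simp only [Matrix.add_mul, Matrix.mul_add, Matrix.smul_mul, Matrix.mul_smul,
    hPP _ _ hn, hPM, hMP, hMM _ _ _ _ hn, smul_zero, add_zero, zero_add, smul_smul,
    smul_sub]
  rw [c1, c2, c3, one_smul]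
  abel

private lemma hTpsd (a θ n0 n1 s : ℝ) (hs0 : 0 < s) :
    (|a| • Pm n0 n1 + s⁻¹ • Mm a θ n0 n1).PosSemidef := by
  rw [Matrix.posSemidef_iff_dotProduct_mulVec]
  constructor
  · ext i j
    fin_cases i <;> fin_cases j <;>
      simp [Pm, Mm, Matrix.conjTranspose_apply, Matrix.vecHead, Matrix.vecTail] <;> ring
  · intro x
    have hx : star x = x := by
      funext i; simp
    rw [hx]
    have key : dotProduct x ((|a| • Pm n0 n1 + s⁻¹ • Mm a θ n0 n1) *ᵥ x)
        = |a| * (n1 * x 0 - n0 * x 1)^2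
          + s⁻¹ * ((a * (n0 * x 0 + n1 * x 1) + θ * x 2)^2
             + 2*θ^2*(n0 * x 0 + n1 * x 1)^2 + θ^2 * (x 2)^2) := by
      simp [Pm, Mm, Matrix.mulVec, dotProduct, Fin.sum_univ_three,
        Matrix.vecHead, Matrix.vecTail]
      ring
    rw [key]
    have h1 : (0:ℝ) ≤ |a| := abs_nonneg a
    have h2 : (0:ℝ) ≤ s⁻¹ := by positivity
    positivity

set_option maxHeartbeats 1000000 in
/-- There exist constants `c, C > 0` independent of `ρ, θ, vₙ` such that for all `ψ = (φ, χ)`: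
`c E ≤ |Aₙ(u)|_Θ ψ·ψ ≤ C E` with `E = ρ|vₙ|(φₙ^⊥)² + (ρ|vₙ| + θ)φₙ² + χ²/(ρ|vₙ| + θ)`. -/
theorem stmt_7 :
    ∃ c C : ℝ, 0 < c ∧ 0 < C ∧
      ∀ (ρ θ vn : ℝ) (hρ : 0 < ρ) (hθ : 0 < θ)
    (n : Fin 2 → ℝ) (hn : n 0 ^ 2 + n 1 ^ 2 = 1)
    (Th A : Matrix (Fin 3) (Fin 3) ℝ)
    (hTh : Th = Matrix.diagonal ![1, 1, θ])
    (hA : A = !![ρ * vn, 0, n 0; 0, ρ * vn, n 1; n 0, n 1, 0])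
    (R : Matrix (Fin 3) (Fin 3) ℝ) (dv : Fin 3 → ℝ)
    (hR : R * Rᵀ = 1)
    (hdec : Th * A * Th = R * Matrix.diagonal dv * Rᵀ)
        (Mabs : Matrix (Fin 3) (Fin 3) ℝ)
    (hMabs : Mabs = Th⁻¹ * (R * Matrix.diagonal (fun i => |dv i|) * Rᵀ) * Th⁻¹)
        (φ : Fin 2 → ℝ) (χ : ℝ) (φn : ℝ) (hφn : φn = φ 0 * n 0 + φ 1 * n 1),
        c * (ρ * |vn| * ((φ 0 - φn * n 0) ^ 2 + (φ 1 - φn * n 1) ^ 2)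
              + (ρ * |vn| + θ) * φn ^ 2 + χ ^ 2 / (ρ * |vn| + θ)) ≤
          (Mabs *ᵥ ![φ 0, φ 1, χ]) ⬝ᵥ ![φ 0, φ 1, χ] ∧
        (Mabs *ᵥ ![φ 0, φ 1, χ]) ⬝ᵥ ![φ 0, φ 1, χ] ≤
          C * (ρ * |vn| * ((φ 0 - φn * n 0) ^ 2 + (φ 1 - φn * n 1) ^ 2)
              + (ρ * |vn| + θ) * φn ^ 2 + χ ^ 2 / (ρ * |vn| + θ)) := by
  refine ⟨1/16, 6, by norm_num, by norm_num, ?_⟩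
  intro ρ θ vn hρ hθ n hn Th A hTh hA R dv hR hdec Mabs hMabs φ χ φn hφn
  subst hTh hA hMabs hφn
  set n0 := n 0 with hn0
  set n1 := n 1 with hn1
  set a := ρ * vn with ha
  set b := |a| with hb
  set s := Real.sqrt (a^2 + 4*θ^2) with hs
  have hs0 : 0 < s := Real.sqrt_pos.mpr (by positivity)
  have hs2 : s^2 = a^2 + 4*θ^2 := Real.sq_sqrt (by positivity)
  have hbnn : 0 ≤ b := abs_nonneg a
  have hb2 : b^2 = a^2 := sq_abs a
  have hbρ : ρ * |vn| = b := by rw [hb, ha, abs_mul, abs_of_pos hρ]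
  -- explicit form of Th * A * Th
  have hS : Matrix.diagonal ![1, 1, θ] * !![a, 0, n0; 0, a, n1; n0, n1, 0] *
      Matrix.diagonal ![1, 1, θ] = Sm a θ n0 n1 := by
    ext i j
    fin_cases i <;> fin_cases j <;>
      simp [Sm, Matrix.mul_apply, Fin.sum_univ_three, Matrix.diagonal,
        Matrix.vecHead, Matrix.vecTail] <;> ring
  rw [hS] at hdec
  -- orthogonality
  have hRtR : Rᵀ * R = 1 := mul_eq_one_comm.mp hR
  have hconj : ∀ (E F : Matrix (Fin 3) (Fin 3) ℝ),
      (R * E * Rᵀ) * (R * F * Rᵀ) = R * (E * F) * Rᵀ := by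
    intro E F
    calc (R * E * Rᵀ) * (R * F * Rᵀ) = R * (E * ((Rᵀ * R) * (F * Rᵀ))) := by
          simp only [Matrix.mul_assoc]
      _ = R * (E * F) * Rᵀ := by rw [hRtR, Matrix.one_mul]; simp only [Matrix.mul_assoc]
  -- T' := R * diag |dv| * Rᵀ is PSD with square S²
  have hRH : Rᴴ = Rᵀ := by ext i j; simp [Matrix.conjTranspose_apply]
  have hT'psd : (R * Matrix.diagonal (fun i => |dv i|) * Rᵀ).PosSemidef := by
    have := (Matrix.PosSemidef.diagonal (fun i => abs_nonneg (dv i))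
      : (Matrix.diagonal (fun i => |dv i|)).PosSemidef).mul_mul_conjTranspose_same R
    rwa [hRH] at this
  have hDD : Matrix.diagonal (fun i => |dv i|) * Matrix.diagonal (fun i => |dv i|)
      = Matrix.diagonal dv * Matrix.diagonal dv := by
    have e : (fun i => |dv i| * |dv i|) = fun i => dv i * dv i :=
      funext fun i => abs_mul_abs_self (dv i)
    rw [Matrix.diagonal_mul_diagonal, Matrix.diagonal_mul_diagonal, e]
  have hT'2 : (R * Matrix.diagonal (fun i => |dv i|) * Rᵀ) ^ 2
      = Sm a θ n0 n1 ^ 2 := by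
    rw [pow_two, pow_two, hconj, hDD, ← hconj, ← hdec]
  -- identify T with T'
  have hTT' : |a| • Pm n0 n1 + s⁻¹ • Mm a θ n0 n1
      = R * Matrix.diagonal (fun i => |dv i|) * Rᵀ := by
    open scoped MatrixOrder Matrix.Norms.L2Operator in
    refine (CFC.sq_eq_sq_iff _ _ (hTpsd a θ n0 n1 s hs0).nonneg hT'psd.nonneg).mp ?_
    rw [pow_two, hT2 a θ n0 n1 s hn hs0 hs2, hT'2, pow_two]
  -- inverse of Th
  have hThinv : (Matrix.diagonal ![1, 1, θ] : Matrix (Fin 3) (Fin 3) ℝ)⁻¹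
      = Matrix.diagonal ![1, 1, θ⁻¹] := by
    refine Matrix.inv_eq_right_inv ?_
    rw [Matrix.diagonal_mul_diagonal]
    ext i j
    fin_cases i <;> fin_cases j <;>
      simp [Matrix.diagonal, Matrix.one_apply, Matrix.vecHead, Matrix.vecTail,
        mul_inv_cancel₀ hθ.ne']
  -- the quadratic form
  set p := φ 0 * n0 + φ 1 * n1 with hp
  set q := n1 * φ 0 - n0 * φ 1 with hq
  set N := (a*p + χ)^2 + 2*θ^2*p^2 + χ^2 with hN
  have hQ : (((Matrix.diagonal ![1, 1, θ] : Matrix (Fin 3) (Fin 3) ℝ)⁻¹ *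
        (R * Matrix.diagonal (fun i => |dv i|) * Rᵀ) *
        (Matrix.diagonal ![1, 1, θ])⁻¹) *ᵥ ![φ 0, φ 1, χ]) ⬝ᵥ ![φ 0, φ 1, χ]
      = b * q^2 + s⁻¹ * N := by
    rw [hThinv, ← hTT']
    show _ = b * q^2 + s⁻¹ * N
    rw [hN, hq, hp]
    simp [Pm, Mm, Matrix.mulVec, dotProduct, Matrix.mul_apply,
      Fin.sum_univ_three, Matrix.diagonal, Matrix.vecHead, Matrix.vecTail]
    field_simp
    ring
  rw [hQ]
  -- rewrite the energy
  have hq2 : (φ 0 - p * n0)^2 + (φ 1 - p * n1)^2 = q^2 := by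
    rw [hq, hp]
    linear_combination ((φ 0 * n0 + φ 1 * n1)^2 - φ 0^2 - φ 1^2) * hn
  rw [hbρ, hq2]
  -- numeric comparisons
  set d := b + θ with hd
  have hd0 : 0 < d := by positivity
  clear hQ hTT' hdec hS hRtR hconj hRH hT'psd hDD hT'2 hThinv hR
  clear_value n0 n1 a b s p q N d
  have hsd1 : s ≤ 2*d := by
    have h1 : s ≤ b + 2*θ := by
      rw [hs, ← Real.sqrt_sq (by positivity : (0:ℝ) ≤ b + 2*θ)]
      exact Real.sqrt_le_sqrt (by nlinarith [hb2, hbnn, hθ.le])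
    rw [hd]; linarith
  have hsd2 : d ≤ 2*s := by
    nlinarith [hs2, hb2, sq_nonneg (b - θ), hs0, hd0, mul_pos hs0 hd0, hbnn, hθ.le]
  have hN0 : 0 ≤ N := by rw [hN]; positivity
  have hbq : 0 ≤ b * q^2 := by positivity
  have hN8 : d^2*p^2 + χ^2 ≤ 8*N := by
    rw [hN, hd]
    nlinarith [hb2, hbnn, hθ.le, sq_nonneg (3*(a*p) + 4*χ), sq_nonneg χ,
      sq_nonneg ((b - θ)*p), mul_nonneg (mul_nonneg hbnn hθ.le) (sq_nonneg p)]
  have hNU : N ≤ 2*d^2*p^2 + 3*χ^2 := by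
    rw [hN, hd]
    nlinarith [hb2, hbnn, hθ.le, sq_nonneg (a*p - χ),
      mul_nonneg (mul_nonneg hbnn hθ.le) (sq_nonneg p)]
  constructor
  · -- lower bound
    have l1 : (1/16) * (d*p^2 + χ^2/d) ≤ s⁻¹ * N := by
      have e1 : (1/16) * (d*p^2 + χ^2/d) = ((1/16)*(d^2*p^2 + χ^2))/d := by
        field_simp
      have e2 : s⁻¹ * N = N / s := by ring
      rw [e1, e2, div_le_div_iff₀ hd0 hs0]
      have m1 : (d^2*p^2 + χ^2) * s ≤ (8*N) * s :=
        mul_le_mul_of_nonneg_right hN8 hs0.le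
      have m2 : (8*N) * s ≤ (8*N) * (2*d) :=
        mul_le_mul_of_nonneg_left hsd1 (by linarith)
      nlinarith [m1, m2]
    linarith [l1, hbq]
  · -- upper bound
    have l2 : s⁻¹ * N ≤ 6 * (d*p^2 + χ^2/d) := by
      have e1 : 6 * (d*p^2 + χ^2/d) = (6*(d^2*p^2 + χ^2))/d := by
        field_simp
      have e2 : s⁻¹ * N = N / s := by ring
      rw [e1, e2, div_le_div_iff₀ hs0 hd0]
      have m1 : N * d ≤ (2*d^2*p^2 + 3*χ^2) * d :=
        mul_le_mul_of_nonneg_right hNU hd0.le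
      have m2 : (2*d^2*p^2 + 3*χ^2) * d ≤ (2*d^2*p^2 + 3*χ^2) * (2*s) :=
        mul_le_mul_of_nonneg_left hsd2 (by positivity)
      nlinarith [m1, m2, sq_nonneg p, sq_nonneg χ, hs0, mul_nonneg (sq_nonneg (d*p)) hs0.le, mul_nonneg (sq_nonneg χ) hs0.le]
    linarith [l2, hbq]
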